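/- Let A be a square matrix, A* a square matrix of the same size with ρ(A*)<1, and suppose A = A* + A e₁ e₁ᵀ where e₁ is the first standard basis vector. Let E = (I−A*)^{-1} A and suppose e₁ᵀ E e₁ = 1. Then e₁ᵀ(I−A*)^{-1} is a left 1-eigenvector of A, i.e. e₁ᵀ(I−A*)^{-1} A = e₁ᵀ(I−A*)^{-1}. -/

import Mathlib

open Matrix

/-- Spectral radius of a real square matrix: the supremum of the moduli of the
complex eigenvalues of its complexification. -/
noncomputable def specRad {n : ℕ} (A : Matrix (Fin n) (Fin n) ℝ) : ℝ :=
  sSup {r : ℝ | ∃ z : ℂ, z ∈ spectrum ℂ (A.map (Complex.ofReal ·)) ∧ r = ‖z‖}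

lemma isUnit_one_sub_of_specRad_lt_one {n : ℕ} (A : Matrix (Fin n) (Fin n) ℝ)
    (hρ : specRad A < 1) : IsUnit (1 - A).det := by
  by_contra hdet
  have h1 : (1 : ℂ) ∈ spectrum ℂ (A.map (Complex.ofReal ·)) := by
    rw [spectrum.mem_iff]
    intro hu
    rw [Matrix.isUnit_iff_isUnit_det] at hu
    apply hdet
    have : (algebraMap ℂ (Matrix (Fin n) (Fin n) ℂ) 1 - A.map (Complex.ofReal ·))
        = (1 - A).map (Complex.ofReal ·) := by
      simp [Matrix.map_sub, Matrix.map_one _ Complex.ofReal_zero Complex.ofReal_one]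
    rw [this] at hu
    have hu' : IsUnit ((algebraMap ℝ ℂ).mapMatrix (1 - A)).det := hu
    rw [← RingHom.map_det] at hu'
    exact (isUnit_map_iff (algebraMap ℝ ℂ) _).mp hu'
  have hmem : (1 : ℝ) ∈ {r : ℝ | ∃ z : ℂ, z ∈ spectrum ℂ (A.map (Complex.ofReal ·)) ∧
      r = ‖z‖} := ⟨1, h1, by simp⟩
  have hbdd : BddAbove {r : ℝ | ∃ z : ℂ, z ∈ spectrum ℂ (A.map (Complex.ofReal ·)) ∧
      r = ‖z‖} := by
    have hfin : ({r : ℝ | ∃ z : ℂ, z ∈ spectrum ℂ (A.map (Complex.ofReal ·)) ∧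
        r = ‖z‖}).Finite := by
      have := (Matrix.finite_spectrum (A.map (Complex.ofReal ·))).image (fun z : ℂ => ‖z‖)
      apply this.subset
      rintro r ⟨z, hz, rfl⟩
      exact ⟨z, hz, rfl⟩
    exact hfin.bddAbove
  have : (1 : ℝ) ≤ specRad A := le_csSup hbdd hmem
  linarith

/-- Suppose `A = A* + A e₁ e₁ᵀ` with `ρ(A*) < 1`, let `E = (I − A*)⁻¹ A` and suppose
`e₁ᵀ E e₁ = 1`. Then `e₁ᵀ (I − A*)⁻¹` is a left `1`-eigenvector of `A`:
`e₁ᵀ (I − A*)⁻¹ A = e₁ᵀ (I − A*)⁻¹`. -/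
theorem left_one_eigenvector_of_first_column_modification
    {d : ℕ} (A Astar : Matrix (Fin (d + 1)) (Fin (d + 1)) ℝ)
    (hρ : specRad Astar < 1)
    (e₁ : Fin (d + 1) → ℝ) (he₁ : e₁ = Pi.single 0 1)
    (hA : A = Astar + Matrix.vecMulVec (A *ᵥ e₁) e₁)
    (E : Matrix (Fin (d + 1)) (Fin (d + 1)) ℝ)
    (hE : E = (1 - Astar)⁻¹ * A)
    (h11 : E 0 0 = 1) :
    Matrix.vecMul (Matrix.vecMul e₁ (1 - Astar)⁻¹) A = Matrix.vecMul e₁ (1 - Astar)⁻¹ := by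
  have hu := isUnit_one_sub_of_specRad_lt_one Astar hρ
  set v := Matrix.vecMul e₁ (1 - Astar)⁻¹ with hv
  have hvIA : Matrix.vecMul v (1 - Astar) = e₁ := by
    rw [hv, Matrix.vecMul_vecMul, Matrix.nonsing_inv_mul _ hu, Matrix.vecMul_one]
  have hvA : Matrix.vecMul v Astar = v - e₁ := by
    have := hvIA
    rw [Matrix.vecMul_sub, Matrix.vecMul_one] at this
    funext j
    have := congrFun this j
    simp [Pi.sub_apply] at this ⊢
    linarith
  have hdot : v ⬝ᵥ (A *ᵥ e₁) = 1 := by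
    have : v ⬝ᵥ (A *ᵥ e₁) = Matrix.vecMul v A ⬝ᵥ e₁ := Matrix.dotProduct_mulVec v A e₁
    rw [this, hv, Matrix.vecMul_vecMul, ← hE, he₁]
    simp [Matrix.vecMul, dotProduct, Pi.single_apply]
    convert h11 using 2
  calc Matrix.vecMul v A
      = Matrix.vecMul v Astar + Matrix.vecMul v (Matrix.vecMulVec (A *ᵥ e₁) e₁) := by
        rw [← Matrix.vecMul_add, ← hA]
    _ = (v - e₁) + (v ⬝ᵥ (A *ᵥ e₁)) • e₁ := by
        rw [hvA]
        congr 1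
        funext j
        simp [Matrix.vecMul, Matrix.vecMulVec, dotProduct, Finset.sum_mul, mul_assoc]
    _ = v := by rw [hdot]; funext j; simp
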